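/- Let 𝓕 be a class of Kripke frames over a finite alphabet A that is closed under countable disjoint sums. Then the modal depth of 𝓕 equals the modal depth of its logic: md(𝓕) = md(Log(𝓕)). -/

import Mathlib

set_option maxHeartbeats 1000000

/-- Modal formulas over an alphabet `A` of diamonds, with variables `pₙ`,
falsum and implication as primitive Boolean connectives. -/
inductive MF (A : Type) : Type
  | var : ℕ → MF A
  | bot : MF A
  | imp : MF A → MF A → MF A
  | dia : A → MF A → MF A

namespace MF

variable {A : Type}

def neg (φ : MF A) : MF A := .imp φ .bot
def top : MF A := neg .bot
def or (φ ψ : MF A) : MF A := .imp (neg φ) ψ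
def and (φ ψ : MF A) : MF A := neg (.imp φ (neg ψ))
def box (a : A) (φ : MF A) : MF A := neg (.dia a (neg φ))
def iff (φ ψ : MF A) : MF A := and (.imp φ ψ) (.imp ψ φ)

def bigOr : List (MF A) → MF A
  | [] => .bot
  | φ :: r => or φ (bigOr r)

def bigAnd : List (MF A) → MF A
  | [] => top
  | φ :: r => and φ (bigAnd r)

def subst (σ : ℕ → MF A) : MF A → MF A
  | .var n => σ n
  | .bot => .bot
  | .imp φ ψ => .imp (subst σ φ) (subst σ ψ)
  | .dia a φ => .dia a (subst σ φ)

/-- `φ` is a `k`-formula: all its variables are among `p₀,…,p_{k-1}`. -/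
def varsBelow (k : ℕ) : MF A → Prop
  | .var n => n < k
  | .bot => True
  | .imp φ ψ => varsBelow k φ ∧ varsBelow k ψ
  | .dia _ φ => varsBelow k φ

/-- Modal depth: maximal number of nested modalities. -/
def depth : MF A → ℕ
  | .var _ => 0
  | .bot => 0
  | .imp φ ψ => max (depth φ) (depth ψ)
  | .dia _ φ => depth φ + 1

end MF

/-- Truth in a Kripke model `(X, R, θ)` at a point. -/
def satM {A X : Type} (R : A → X → X → Prop) (θ : ℕ → Set X) : X → MF A → Prop
  | w, MF.var n => w ∈ θ n
  | _, MF.bot => False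
  | w, MF.imp φ ψ => satM R θ w φ → satM R θ w ψ
  | w, MF.dia a φ => ∃ v, R a w v ∧ satM R θ v φ

/-- Validity in a Kripke frame. -/
def validM {A X : Type} (R : A → X → X → Prop) (φ : MF A) : Prop :=
  ∀ θ w, satM R θ w φ

/-- `φ` is a substitution instance of a classical propositional tautology
(equivalently: true under every Boolean valuation treating variables and
diamond formulas as atoms). -/
def IsTautInstance {A : Type} (φ : MF A) : Prop :=
  ∀ f : MF A → Prop, ¬ f .bot → (∀ ψ χ, f (.imp ψ χ) ↔ (f ψ → f χ)) → f φ

/-- `L` is a normal modal logic over `A`. -/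
structure IsNormalLogic {A : Type} (L : Set (MF A)) : Prop where
  taut : ∀ φ : MF A, IsTautInstance φ → φ ∈ L
  dia_bot : ∀ a : A, (MF.dia a MF.bot).neg ∈ L
  dia_or : ∀ a : A,
    MF.imp (.dia a (MF.or (.var 0) (.var 1))) (MF.or (.dia a (.var 0)) (.dia a (.var 1))) ∈ L
  mp : ∀ {φ ψ : MF A}, MF.imp φ ψ ∈ L → φ ∈ L → ψ ∈ L
  subst_mem : ∀ {φ : MF A} (σ : ℕ → MF A), φ ∈ L → φ.subst σ ∈ L
  mono : ∀ (a : A) {φ ψ : MF A}, MF.imp φ ψ ∈ L → MF.imp (.dia a φ) (.dia a ψ) ∈ L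

/-- `L` is `k`-finite: there are finitely many `k`-formulas up to `L`-equivalence. -/
def kFinite {A : Type} (L : Set (MF A)) (k : ℕ) : Prop :=
  ∃ S : Finset (MF A), ∀ φ : MF A, φ.varsBelow k → ∃ ψ ∈ S, MF.iff φ ψ ∈ L

def LocallyTabular {A : Type} (L : Set (MF A)) : Prop := ∀ k : ℕ, kFinite L k

/-- `◇_S φ`, the disjunction of `◇φ` over `◇ ∈ S`. -/
noncomputable def diaS {A : Type} (S : Finset A) (φ : MF A) : MF A :=
  MF.bigOr (S.toList.map (fun a => MF.dia a φ))

/-- `(◇_S)^n φ`. -/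
noncomputable def diaSpow {A : Type} (S : Finset A) : ℕ → MF A → MF A
  | 0, φ => φ
  | n + 1, φ => diaS S (diaSpow S n φ)

/-- `◇_S^{≤ m} φ = ⋁_{i ≤ m} (◇_S)^i φ`. -/
noncomputable def diaSle {A : Type} (S : Finset A) (m : ℕ) (φ : MF A) : MF A :=
  MF.bigOr ((List.range (m + 1)).map (fun i => diaSpow S i φ))

/-- `□* φ = ¬◇_S^{≤ m}¬φ`. -/
noncomputable def boxSle {A : Type} (S : Finset A) (m : ℕ) (φ : MF A) : MF A :=
  MF.neg (diaSle S m (MF.neg φ))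

/-- The pretransitivity formula `atr_S(m) = (◇_S)^{m+1} p₀ → ◇_S^{≤m} p₀`. -/
noncomputable def atrS {A : Type} (S : Finset A) (m : ℕ) : MF A :=
  MF.imp (diaSpow S (m + 1) (.var 0)) (diaSle S m (.var 0))

/-- The finite-height formulas `B_h^{≤m}` over the compound modality `◇_S^{≤m}`:
`B₀ = ⊥`, `B_h = p_h → □*(◇* p_h ∨ B_{h-1})`. -/
noncomputable def BstarS {A : Type} (S : Finset A) (m : ℕ) : ℕ → MF A
  | 0 => .bot
  | h + 1 => MF.imp (.var (h + 1))
      (boxSle S m (MF.or (diaSle S m (.var (h + 1))) (BstarS S m h)))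

/-- Unimodal finite-height formulas: `B₀ = ⊥`, `B_h = p_h → □(◇ p_h ∨ B_{h-1})`. -/
def BformU : ℕ → MF Unit
  | 0 => .bot
  | h + 1 => MF.imp (.var (h + 1))
      (MF.box () (MF.or (MF.dia () (.var (h + 1))) (BformU h)))

/-- `p_i ∧ ◇_S (p_{i+1} ∧ ◇_S ( … ∧ ◇_S p_{i+n}) … )`. -/
noncomputable def chainS {A : Type} (S : Finset A) : ℕ → ℕ → MF A
  | i, 0 => .var i
  | i, n + 1 => MF.and (.var i) (diaS S (chainS S (i + 1) n))

/-- The list of pairs `(i, j)` with `i < j ≤ n`. -/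
def pairsLT (n : ℕ) : List (ℕ × ℕ) :=
  (List.range (n + 1)).flatMap (fun j => (List.range j).map (fun i => (i, j)))

/-- The reducible-path formula `R_m(◇_S)`. -/
noncomputable def RmS {A : Type} (S : Finset A) (m : ℕ) : MF A :=
  MF.imp (chainS S 0 (m + 1))
    (MF.or
      (MF.bigOr ((pairsLT (m + 1)).map
        (fun p => diaSpow S p.1 (MF.and (.var p.1) (.var p.2)))))
      (MF.bigOr ((pairsLT m).map
        (fun p => diaSpow S p.1 (MF.and (.var p.1) (diaS S (.var (p.2 + 1))))))))

/-- `n`-fold relational composition: `R⁰ = Id`, `R^{n+1} = R ∘ Rⁿ`. -/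
def relPow {X : Type} (R : X → X → Prop) : ℕ → X → X → Prop
  | 0 => fun a b => a = b
  | n + 1 => fun a c => ∃ b, R a b ∧ relPow R n b c

/-- Reflexive transitive closure `R* = ⋃ₙ Rⁿ`. -/
def relStar {X : Type} (R : X → X → Prop) (a b : X) : Prop := ∃ n, relPow R n a b

/-- `R` is `m`-transitive: `R^{m+1} ⊆ R^{≤ m}`. -/
def mTransitive {X : Type} (R : X → X → Prop) (m : ℕ) : Prop :=
  ∀ a b, relPow R (m + 1) a b → ∃ i ≤ m, relPow R i a b

/-- The union `R_F = ⋃_{◇ ∈ A} R_◇`. -/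
def unionRel {A X : Type} (R : A → X → X → Prop) : X → X → Prop :=
  fun a b => ∃ i, R i a b

/-- `R⁻¹[V] = {x ∣ ∃ y ∈ V, x R y}`. -/
def diaPre {X : Type} (R : X → X → Prop) (V : Set X) : Set X := {x | ∃ y ∈ V, R x y}

/-- The height of `(X, R)` is at most `h`: there is no strictly ascending
(h+1)-chain with respect to `R*`. -/
def heightLE {X : Type} (R : X → X → Prop) (h : ℕ) : Prop :=
  ¬ ∃ x : ℕ → X, ∀ i < h, relStar R (x i) (x (i + 1)) ∧ ¬ relStar R (x (i + 1)) (x i)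

/-- A partition is `R`-tuned. -/
def RTuned {X : Type} (R : X → X → Prop) (𝒰 : Set (Set X)) : Prop :=
  ∀ U ∈ 𝒰, ∀ V ∈ 𝒰, (∃ a ∈ U, ∃ b ∈ V, R a b) → ∀ a ∈ U, ∃ b ∈ V, R a b

/-- A partition is tuned in the frame `(X, (R_◇)_{◇ ∈ A})`. -/
def TunedIn {A X : Type} (R : A → X → X → Prop) (𝒰 : Set (Set X)) : Prop :=
  ∀ a : A, RTuned (R a) 𝒰

/-- `𝒰` refines `𝒱`: every block of `𝒰` is included in a block of `𝒱`. -/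
def Refines {X : Type} (𝒰 𝒱 : Set (Set X)) : Prop := ∀ U ∈ 𝒰, ∃ V ∈ 𝒱, U ⊆ V

/-- The equivalence `≡_𝒱` induced by a family of sets. -/
def famEq {X : Type} (𝒱 : Set (Set X)) (a b : X) : Prop := ∀ V ∈ 𝒱, (a ∈ V ↔ b ∈ V)

/-- The set of equivalence classes of a relation. -/
def eqClasses {X : Type} (E : X → X → Prop) : Set (Set X) := {C | ∃ x, C = {y | E x y}}

/-- Tunedness condition for abstract normal operators `g_◇` on the powerset. -/
def gTuned {A X : Type} (g : A → Set X → Set X) (𝒰 : Set (Set X)) : Prop :=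
  ∀ a : A, ∀ U ∈ 𝒰, ∀ V ∈ 𝒰, (V ∩ g a U).Nonempty → V ⊆ g a U

/-- `C` is a subalgebra of the modal algebra `(𝒫(X), ∪, ∩, ᶜ, (g_◇))`. -/
def IsSubalg {A X : Type} (g : A → Set X → Set X) (C : Set (Set X)) : Prop :=
  ∅ ∈ C ∧ Set.univ ∈ C ∧ (∀ U ∈ C, ∀ V ∈ C, U ∪ V ∈ C) ∧
    (∀ U ∈ C, ∀ V ∈ C, U ∩ V ∈ C) ∧ (∀ U ∈ C, Uᶜ ∈ C) ∧ (∀ U ∈ C, ∀ a : A, g a U ∈ C)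

/-- The subalgebra generated by `𝒬`. -/
def genAlg {A X : Type} (g : A → Set X → Set X) (𝒬 : Set (Set X)) : Set (Set X) :=
  ⋂₀ {C | IsSubalg g C ∧ 𝒬 ⊆ C}

/-- Points of a model indistinguishable by `k`-formulas of depth at most `d`. -/
def modEq {A X : Type} (R : A → X → X → Prop) (θ : ℕ → Set X) (k d : ℕ) (a b : X) : Prop :=
  ∀ φ : MF A, φ.varsBelow k → φ.depth ≤ d → (satM R θ a φ ↔ satM R θ b φ)

/-- Points of a model indistinguishable by all `k`-formulas. -/
def modEqAll {A X : Type} (R : A → X → X → Prop) (θ : ℕ → Set X) (k : ℕ) (a b : X) : Prop :=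
  ∀ φ : MF A, φ.varsBelow k → (satM R θ a φ ↔ satM R θ b φ)

/-- The modal depth of the `k`-model `(X, R, θ)` is at most `d`. -/
def mdModelLE {A X : Type} (R : A → X → X → Prop) (θ : ℕ → Set X) (k d : ℕ) : Prop :=
  ∀ e : ℕ, modEq R θ k e ≠ modEq R θ k (e + 1) → e ≤ d

/-- Bundled Kripke frames over the alphabet `A`. -/
structure KFrame (A : Type) : Type 1 where
  W : Type
  R : A → W → W → Prop

/-- The logic of a class of Kripke frames. -/
def LogC {A : Type} (𝓕 : Set (KFrame A)) : Set (MF A) :=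
  {φ | ∀ F ∈ 𝓕, validM F.R φ}

/-- `Y` is an upset of the frame: `R_◇[Y] ⊆ Y` for every `◇`. -/
def UpsetIn {A X : Type} (R : A → X → X → Prop) (Y : Set X) : Prop :=
  ∀ a : A, ∀ y ∈ Y, ∀ z, R a y z → z ∈ Y

/-- The relations of a frame restricted to a subset. -/
def restrR {A X : Type} (R : A → X → X → Prop) (Y : Set X) : A → Y → Y → Prop :=
  fun a u v => R a u.val v.val

/-- A valuation restricted to a subset. -/
def restrV {X : Type} (θ : ℕ → Set X) (Y : Set X) : ℕ → Set Y :=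
  fun n => {u | u.val ∈ θ n}

/-- The restriction `F ↾ Y` of a frame to a subset of its domain. -/
def KFrame.restrict {A : Type} (F : KFrame A) (Y : Set F.W) : KFrame A :=
  ⟨Y, restrR F.R Y⟩

/-- The induced partitions `𝒱_d`: `𝒱₀ = X/≡_𝒱` and `𝒱_{d+1}` is the quotient by
the family `𝒱_d ∪ {R_◇⁻¹[V] : ◇ ∈ A, V ∈ 𝒱_d}`. -/
def stageClasses {A X : Type} (R : A → X → X → Prop) (𝒱 : Set (Set X)) : ℕ → Set (Set X)
  | 0 => eqClasses (famEq 𝒱)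
  | d + 1 =>
      eqClasses (famEq (stageClasses R 𝒱 d ∪
        {V' | ∃ a : A, ∃ V ∈ stageClasses R 𝒱 d, V' = diaPre (R a) V}))

/-- `𝒱_ω = ⋃_d 𝒱_d`. -/
def stageUnion {A X : Type} (R : A → X → X → Prop) (𝒱 : Set (Set X)) : Set (Set X) :=
  ⋃ d : ℕ, stageClasses R 𝒱 d

/-- `md(V) = min {d ∣ V ∈ 𝒱_d}` (as an extended natural). -/
noncomputable def mdBlock {A X : Type} (R : A → X → X → Prop) (𝒱 : Set (Set X))
    (V : Set X) : ℕ∞ :=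
  ⨅ d ∈ {d : ℕ | V ∈ stageClasses R 𝒱 d}, (d : ℕ∞)

/-- `md(𝒱) = sup {md(V) ∣ V ∈ 𝒱_ω}`. -/
noncomputable def mdFam {A X : Type} (R : A → X → X → Prop) (𝒱 : Set (Set X)) : ℕ∞ :=
  ⨆ V ∈ stageUnion R 𝒱, mdBlock R 𝒱 V

/-- The modal depth of a frame: `sup` of `md(𝒱)` over finite families `𝒱`. -/
noncomputable def mdFrame {A : Type} (F : KFrame A) : ℕ∞ :=
  ⨆ 𝒱 ∈ {𝒱 : Set (Set F.W) | 𝒱.Finite}, mdFam F.R 𝒱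

/-- The modal depth of a class of frames. -/
noncomputable def mdClass {A : Type} (𝓕 : Set (KFrame A)) : ℕ∞ :=
  ⨆ F ∈ 𝓕, mdFrame F

/-- `md(L) = sup_φ min {md(ψ) ∣ φ ↔ ψ ∈ L}`. -/
noncomputable def mdLogic {A : Type} (L : Set (MF A)) : ℕ∞ :=
  ⨆ φ : MF A, ⨅ ψ ∈ {ψ : MF A | MF.iff φ ψ ∈ L}, (ψ.depth : ℕ∞)

/-- `tra(𝓕)`: the least `m` such that every frame in `𝓕` is `m`-transitive. -/
noncomputable def traClass {A : Type} (𝓕 : Set (KFrame A)) : ℕ∞ :=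
  ⨅ m ∈ {m : ℕ | ∀ F ∈ 𝓕, mTransitive (unionRel F.R) m}, (m : ℕ∞)

/-- The disjoint sum of a family of frames. -/
def disjSum {A I : Type} (F : I → KFrame A) : KFrame A where
  W := Σ i : I, (F i).W
  R a x y := ∃ (i : I) (u v : (F i).W), x = ⟨i, u⟩ ∧ y = ⟨i, v⟩ ∧ (F i).R a u v

/-- The cluster of a point: its equivalence class under `a R* b ∧ b R* a`. -/
def clusterOf {X : Type} (R : X → X → Prop) (x : X) : Set X :=
  {y | relStar R x y ∧ relStar R y x}

/-- `clust(𝓕)`: the restrictions of frames in `𝓕` to their clusters. -/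
def clustC {A : Type} (𝓕 : Set (KFrame A)) : Set (KFrame A) :=
  {G | ∃ F ∈ 𝓕, ∃ x : F.W, G = F.restrict (clusterOf (unionRel F.R) x)}


/-! ### Auxiliary development -/

open Classical

section Aux

variable {A X : Type}

@[simp] lemma satM_var {R : A → X → X → Prop} {θ : ℕ → Set X} {w : X} {n : ℕ} :
    satM R θ w (.var n) ↔ w ∈ θ n := Iff.rfl

@[simp] lemma satM_bot {R : A → X → X → Prop} {θ : ℕ → Set X} {w : X} :
    satM R θ w .bot ↔ False := Iff.rfl

@[simp] lemma satM_imp {R : A → X → X → Prop} {θ : ℕ → Set X} {w : X} {φ ψ : MF A} :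
    satM R θ w (.imp φ ψ) ↔ (satM R θ w φ → satM R θ w ψ) := Iff.rfl

@[simp] lemma satM_dia {R : A → X → X → Prop} {θ : ℕ → Set X} {w : X} {a : A} {φ : MF A} :
    satM R θ w (.dia a φ) ↔ ∃ v, R a w v ∧ satM R θ v φ := Iff.rfl

@[simp] lemma satM_neg {R : A → X → X → Prop} {θ : ℕ → Set X} {w : X} {φ : MF A} :
    satM R θ w φ.neg ↔ ¬ satM R θ w φ := Iff.rfl

@[simp] lemma satM_top {R : A → X → X → Prop} {θ : ℕ → Set X} {w : X} :
    satM R θ w MF.top ↔ True := by simp [MF.top]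

@[simp] lemma satM_and {R : A → X → X → Prop} {θ : ℕ → Set X} {w : X} {φ ψ : MF A} :
    satM R θ w (φ.and ψ) ↔ (satM R θ w φ ∧ satM R θ w ψ) := by
  simp [MF.and]

@[simp] lemma satM_or {R : A → X → X → Prop} {θ : ℕ → Set X} {w : X} {φ ψ : MF A} :
    satM R θ w (φ.or ψ) ↔ (satM R θ w φ ∨ satM R θ w ψ) := by
  simp [MF.or]; tauto

@[simp] lemma satM_iff {R : A → X → X → Prop} {θ : ℕ → Set X} {w : X} {φ ψ : MF A} :
    satM R θ w (φ.iff ψ) ↔ (satM R θ w φ ↔ satM R θ w ψ) := by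
  simp [MF.iff]; tauto

lemma satM_bigAnd {R : A → X → X → Prop} {θ : ℕ → Set X} {w : X} {l : List (MF A)} :
    satM R θ w (MF.bigAnd l) ↔ ∀ χ ∈ l, satM R θ w χ := by
  induction l with
  | nil => simp [MF.bigAnd]
  | cons χ r ih => simp [MF.bigAnd, ih]

lemma satM_bigOr {R : A → X → X → Prop} {θ : ℕ → Set X} {w : X} {l : List (MF A)} :
    satM R θ w (MF.bigOr l) ↔ ∃ χ ∈ l, satM R θ w χ := by
  induction l with
  | nil => simp [MF.bigOr]
  | cons χ r ih => simp [MF.bigOr, ih]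

/-! #### depth and varsBelow simp lemmas -/

@[simp] lemma depth_neg {φ : MF A} : φ.neg.depth = φ.depth := by simp [MF.neg, MF.depth]

@[simp] lemma depth_and {φ ψ : MF A} : (φ.and ψ).depth = max φ.depth ψ.depth := by
  simp [MF.and, MF.depth]

@[simp] lemma depth_or {φ ψ : MF A} : (φ.or ψ).depth = max φ.depth ψ.depth := by
  simp [MF.or, MF.depth]

@[simp] lemma depth_top : (MF.top : MF A).depth = 0 := by simp [MF.top, MF.depth]

lemma depth_bigAnd_le {l : List (MF A)} {d : ℕ} (h : ∀ χ ∈ l, χ.depth ≤ d) :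
    (MF.bigAnd l).depth ≤ d := by
  induction l with
  | nil => simp [MF.bigAnd]
  | cons χ r ih =>
      simp only [MF.bigAnd, depth_and, max_le_iff]
      exact ⟨h χ (by simp), ih fun χ hχ => h χ (by simp [hχ])⟩

lemma depth_bigOr_le {l : List (MF A)} {d : ℕ} (h : ∀ χ ∈ l, χ.depth ≤ d) :
    (MF.bigOr l).depth ≤ d := by
  induction l with
  | nil => simp [MF.bigOr, MF.depth]
  | cons χ r ih =>
      simp only [MF.bigOr, depth_or, max_le_iff]
      exact ⟨h χ (by simp), ih fun χ hχ => h χ (by simp [hχ])⟩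

@[simp] lemma varsBelow_neg {k : ℕ} {φ : MF A} : φ.neg.varsBelow k ↔ φ.varsBelow k := by
  simp [MF.neg, MF.varsBelow]

@[simp] lemma varsBelow_and {k : ℕ} {φ ψ : MF A} :
    (φ.and ψ).varsBelow k ↔ (φ.varsBelow k ∧ ψ.varsBelow k) := by
  simp [MF.and, MF.varsBelow]

@[simp] lemma varsBelow_or {k : ℕ} {φ ψ : MF A} :
    (φ.or ψ).varsBelow k ↔ (φ.varsBelow k ∧ ψ.varsBelow k) := by
  simp [MF.or, MF.varsBelow]

@[simp] lemma varsBelow_top {k : ℕ} : (MF.top : MF A).varsBelow k := by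
  simp [MF.top, MF.varsBelow]

lemma varsBelow_bigAnd {l : List (MF A)} {k : ℕ} (h : ∀ χ ∈ l, χ.varsBelow k) :
    (MF.bigAnd l).varsBelow k := by
  induction l with
  | nil => simp [MF.bigAnd]
  | cons χ r ih =>
      simp only [MF.bigAnd, varsBelow_and]
      exact ⟨h χ (by simp), ih fun χ hχ => h χ (by simp [hχ])⟩

lemma varsBelow_bigOr {l : List (MF A)} {k : ℕ} (h : ∀ χ ∈ l, χ.varsBelow k) :
    (MF.bigOr l).varsBelow k := by
  induction l with
  | nil => simp [MF.bigOr, MF.varsBelow]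
  | cons χ r ih =>
      simp only [MF.bigOr, varsBelow_or]
      exact ⟨h χ (by simp), ih fun χ hχ => h χ (by simp [hχ])⟩

/-! #### Type formulas -/

/-- The conjunction over `l` of `χ` or `¬χ` according to the sign function `f`. -/
noncomputable def mkType (l : List (MF A)) (f : MF A → Bool) : MF A :=
  MF.bigAnd (l.map fun χ => if f χ then χ else χ.neg)

lemma satM_mkType {R : A → X → X → Prop} {θ : ℕ → Set X} {w : X} {l : List (MF A)}
    {f : MF A → Bool} :
    satM R θ w (mkType l f) ↔ ∀ χ ∈ l, (satM R θ w χ ↔ f χ = true) := by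
  rw [mkType, satM_bigAnd]
  constructor
  · intro h χ hχ
    have := h _ (List.mem_map_of_mem hχ)
    cases hf : f χ <;> simp [hf] at this ⊢ <;> tauto
  · intro h ψ hψ
    rcases List.mem_map.mp hψ with ⟨χ, hχ, rfl⟩
    have := h χ hχ
    cases hf : f χ <;> simp [hf] at this ⊢ <;> tauto

lemma depth_mkType_le {l : List (MF A)} {f : MF A → Bool} {d : ℕ}
    (h : ∀ χ ∈ l, χ.depth ≤ d) : (mkType l f).depth ≤ d := by
  apply depth_bigAnd_le
  intro ψ hψ
  rcases List.mem_map.mp hψ with ⟨χ, hχ, rfl⟩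
  cases hf : f χ <;> simp [hf, h χ hχ]

lemma varsBelow_mkType {l : List (MF A)} {f : MF A → Bool} {k : ℕ}
    (h : ∀ χ ∈ l, χ.varsBelow k) : (mkType l f).varsBelow k := by
  apply varsBelow_bigAnd
  intro ψ hψ
  rcases List.mem_map.mp hψ with ⟨χ, hχ, rfl⟩
  cases hf : f χ <;> simp [hf, h χ hχ]

end Aux


section Aux2

open Classical

variable {A X : Type}

/-- The atoms of depth `d` over variables below `k`: the variables together with
formulas `◇ₐτ` for `τ` a type of level `d-1`. -/
noncomputable def atomsL (A : Type) [Fintype A] (k : ℕ) : ℕ → List (MF A)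
  | 0 => (List.range k).map .var
  | (d+1) => (List.range k).map .var ++
      (((atomsL A k d).sublists.map
          (fun s => mkType (atomsL A k d) (fun χ => decide (χ ∈ s)))).flatMap
        (fun τ => (Finset.univ : Finset A).toList.map (fun a => MF.dia a τ)))

/-- The type formulas of level `d`. -/
noncomputable def typesL (A : Type) [Fintype A] (k d : ℕ) : List (MF A) :=
  (atomsL A k d).sublists.map (fun s => mkType (atomsL A k d) (fun χ => decide (χ ∈ s)))

lemma atomsL_succ [Fintype A] (k d : ℕ) :
    atomsL A k (d+1) = (List.range k).map .var ++
      ((typesL A k d).flatMap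
        (fun τ => (Finset.univ : Finset A).toList.map (fun a => MF.dia a τ))) := rfl

/-- The type of a point. -/
noncomputable def typeAt (R : A → X → X → Prop) (θ : ℕ → Set X) (l : List (MF A)) (w : X) :
    MF A :=
  mkType l (fun χ => decide (χ ∈ l.filter (fun α => decide (satM R θ w α))))

lemma typeAt_mem_typesL [Fintype A] {R : A → X → X → Prop} {θ : ℕ → Set X} {k d : ℕ} {w : X} :
    typeAt R θ (atomsL A k d) w ∈ typesL A k d :=
  List.mem_map.mpr ⟨_, List.mem_sublists.mpr List.filter_sublist, rfl⟩

lemma satM_typeAt {R : A → X → X → Prop} {θ : ℕ → Set X} {l : List (MF A)} {w z : X} :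
    satM R θ z (typeAt R θ l w) ↔ ∀ α ∈ l, (satM R θ z α ↔ satM R θ w α) := by
  rw [typeAt, satM_mkType]
  apply forall₂_congr
  intro α hα
  simp [List.mem_filter, hα]

lemma satM_typeAt_self {R : A → X → X → Prop} {θ : ℕ → Set X} {l : List (MF A)} {w : X} :
    satM R θ w (typeAt R θ l w) := satM_typeAt.mpr fun _ _ => Iff.rfl

lemma var_mem_atomsL {k n : ℕ} [Fintype A] (h : n < k) (d : ℕ) :
    (MF.var n : MF A) ∈ atomsL A k d := by
  cases d with
  | zero => exact List.mem_map.mpr ⟨n, List.mem_range.mpr h, rfl⟩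
  | succ d => exact List.mem_append_left _ (List.mem_map.mpr ⟨n, List.mem_range.mpr h, rfl⟩)

lemma dia_mem_atomsL [Fintype A] {k d : ℕ} {τ : MF A} (a : A) (hτ : τ ∈ typesL A k d) :
    MF.dia a τ ∈ atomsL A k (d+1) := by
  rw [atomsL_succ]
  exact List.mem_append_right _ (List.mem_flatMap.mpr
    ⟨τ, hτ, List.mem_map.mpr ⟨a, Finset.mem_toList.mpr (Finset.mem_univ a), rfl⟩⟩)

lemma mem_atomsL_bound [Fintype A] {k : ℕ} :
    ∀ (d : ℕ), ∀ α ∈ atomsL A k d, (MF.varsBelow k α ∧ MF.depth α ≤ d) := by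
  intro d
  induction d with
  | zero =>
      intro α hα
      rcases List.mem_map.mp hα with ⟨n, hn, rfl⟩
      exact ⟨List.mem_range.mp hn, le_refl 0⟩
  | succ d ih =>
      intro α hα
      rw [atomsL_succ] at hα
      rcases List.mem_append.mp hα with h | h
      · rcases List.mem_map.mp h with ⟨n, hn, rfl⟩
        exact ⟨List.mem_range.mp hn, Nat.zero_le _⟩
      · rcases List.mem_flatMap.mp h with ⟨τ, hτ, hmem⟩
        rcases List.mem_map.mp hmem with ⟨a, _, rfl⟩
        rcases List.mem_map.mp hτ with ⟨s, _, rfl⟩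
        constructor
        · show MF.varsBelow k _
          exact varsBelow_mkType fun χ hχ => (ih χ hχ).1
        · show MF.depth _ + 1 ≤ d + 1
          exact Nat.add_le_add_right (depth_mkType_le fun χ hχ => (ih χ hχ).2) 1

lemma mem_typesL_bound [Fintype A] {k d : ℕ} {τ : MF A} (hτ : τ ∈ typesL A k d) :
    MF.varsBelow k τ ∧ MF.depth τ ≤ d := by
  rcases List.mem_map.mp hτ with ⟨s, _, rfl⟩
  exact ⟨varsBelow_mkType fun χ hχ => (mem_atomsL_bound d χ hχ).1,
    depth_mkType_le fun χ hχ => (mem_atomsL_bound d χ hχ).2⟩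

/-- Indistinguishability by atoms of level `d`. -/
def EdR [Fintype A] (R : A → X → X → Prop) (θ : ℕ → Set X) (k d : ℕ) (x y : X) : Prop :=
  ∀ α ∈ atomsL A k d, (satM R θ x α ↔ satM R θ y α)

lemma EdR_refl [Fintype A] {R : A → X → X → Prop} {θ : ℕ → Set X} {k d : ℕ} (x : X) :
    EdR R θ k d x x := fun _ _ => Iff.rfl

lemma EdR_symm [Fintype A] {R : A → X → X → Prop} {θ : ℕ → Set X} {k d : ℕ} {x y : X}
    (h : EdR R θ k d x y) : EdR R θ k d y x := fun α hα => (h α hα).symm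

lemma EdR_trans [Fintype A] {R : A → X → X → Prop} {θ : ℕ → Set X} {k d : ℕ} {x y z : X}
    (h : EdR R θ k d x y) (h' : EdR R θ k d y z) : EdR R θ k d x z :=
  fun α hα => (h α hα).trans (h' α hα)

/-- Main determinacy lemma: points agreeing on all atoms of level `d` agree on all
formulas of depth at most `d` with variables below `k`. -/
lemma EdR_determines [Fintype A] {R : A → X → X → Prop} {θ : ℕ → Set X} {k : ℕ} (χ : MF A) :
    ∀ (d : ℕ) (x y : X), MF.varsBelow k χ → MF.depth χ ≤ d → EdR R θ k d x y →
      (satM R θ x χ ↔ satM R θ y χ) := by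
  induction χ with
  | var n =>
      intro d x y hv _ hE
      exact hE _ (var_mem_atomsL hv d)
  | bot => intro _ _ _ _ _ _; exact Iff.rfl
  | imp φ ψ ihφ ihψ =>
      intro d x y hv hd hE
      have hv' : MF.varsBelow k φ ∧ MF.varsBelow k ψ := hv
      have hd' : max (MF.depth φ) (MF.depth ψ) ≤ d := hd
      rw [satM_imp, satM_imp, ihφ d x y hv'.1 (le_trans (le_max_left _ _) hd') hE,
        ihψ d x y hv'.2 (le_trans (le_max_right _ _) hd') hE]
  | dia a φ ih =>
      intro d x y hv hd hE
      have hd' : MF.depth φ + 1 ≤ d := hd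
      cases d with
      | zero => omega
      | succ d =>
        have hφd : MF.depth φ ≤ d := by omega
        have key : ∀ x y : X, EdR R θ k (d+1) x y →
            satM R θ x (.dia a φ) → satM R θ y (.dia a φ) := by
          rintro x y hE ⟨v, hR, hvφ⟩
          have hx : satM R θ x (.dia a (typeAt R θ (atomsL A k d) v)) :=
            ⟨v, hR, satM_typeAt_self⟩
          obtain ⟨v', hR', hτ⟩ := (hE _ (dia_mem_atomsL a typeAt_mem_typesL)).mp hx
          exact ⟨v', hR', (ih d v' v hv hφd (satM_typeAt.mp hτ)).mpr hvφ⟩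
        exact ⟨key x y hE, key y x (EdR_symm hE)⟩

lemma EdR_le [Fintype A] {R : A → X → X → Prop} {θ : ℕ → Set X} {k d e : ℕ} {x y : X}
    (h : d ≤ e) (hE : EdR R θ k e x y) : EdR R θ k d x y := fun α hα =>
  EdR_determines α e x y (mem_atomsL_bound d α hα).1
    (le_trans (mem_atomsL_bound d α hα).2 h) hE

/-- Back-and-forth characterization of `EdR` at successor levels. -/
lemma EdR_succ_iff [Fintype A] {R : A → X → X → Prop} {θ : ℕ → Set X} {k d : ℕ} {x y : X} :
    EdR R θ k (d+1) x y ↔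
      ((∀ n < k, (x ∈ θ n ↔ y ∈ θ n)) ∧
       ∀ a : A, (∀ v, R a x v → ∃ v', R a y v' ∧ EdR R θ k d v v') ∧
                (∀ v, R a y v → ∃ v', R a x v' ∧ EdR R θ k d v v')) := by
  constructor
  · intro hE
    have forth : ∀ x y : X, EdR R θ k (d+1) x y →
        ∀ a : A, ∀ v, R a x v → ∃ v', R a y v' ∧ EdR R θ k d v v' := by
      intro x y hE a v hR
      have hx : satM R θ x (.dia a (typeAt R θ (atomsL A k d) v)) :=
        ⟨v, hR, satM_typeAt_self⟩
      obtain ⟨v', hR', hτ⟩ := (hE _ (dia_mem_atomsL a typeAt_mem_typesL)).mp hx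
      exact ⟨v', hR', fun α hα => ((satM_typeAt.mp hτ) α hα).symm⟩
    exact ⟨fun n hn => hE _ (var_mem_atomsL hn (d+1)),
      fun a => ⟨forth x y hE a, forth y x (EdR_symm hE) a⟩⟩
  · rintro ⟨h0, h1⟩ α hα
    rw [atomsL_succ] at hα
    rcases List.mem_append.mp hα with h | h
    · rcases List.mem_map.mp h with ⟨n, hn, rfl⟩
      exact h0 n (List.mem_range.mp hn)
    · rcases List.mem_flatMap.mp h with ⟨τ, hτ, hmem⟩
      rcases List.mem_map.mp hmem with ⟨a, _, rfl⟩
      rcases List.mem_map.mp hτ with ⟨s, _, rfl⟩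
      constructor
      · rintro ⟨v, hR, hvτ⟩
        obtain ⟨v', hR', hE⟩ := (h1 a).1 v hR
        exact ⟨v', hR', satM_mkType.mpr fun β hβ =>
          ((hE β hβ).symm.trans (satM_mkType.mp hvτ β hβ))⟩
      · rintro ⟨v, hR, hvτ⟩
        obtain ⟨v', hR', hE⟩ := (h1 a).2 v hR
        exact ⟨v', hR', satM_mkType.mpr fun β hβ =>
          ((hE β hβ).symm.trans (satM_mkType.mp hvτ β hβ))⟩

lemma EdR_succ_congr [Fintype A] {R : A → X → X → Prop} {θ : ℕ → Set X} {k d e : ℕ}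
    (h : ∀ x y : X, EdR R θ k d x y ↔ EdR R θ k e x y) :
    ∀ x y : X, EdR R θ k (d+1) x y ↔ EdR R θ k (e+1) x y := by
  intro x y
  rw [EdR_succ_iff, EdR_succ_iff]
  constructor
  · rintro ⟨h0, h1⟩
    refine ⟨h0, fun a => ⟨fun v hR => ?_, fun v hR => ?_⟩⟩
    · obtain ⟨v', hR', hE⟩ := (h1 a).1 v hR
      exact ⟨v', hR', (h _ _).mp hE⟩
    · obtain ⟨v', hR', hE⟩ := (h1 a).2 v hR
      exact ⟨v', hR', (h _ _).mp hE⟩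
  · rintro ⟨h0, h1⟩
    refine ⟨h0, fun a => ⟨fun v hR => ?_, fun v hR => ?_⟩⟩
    · obtain ⟨v', hR', hE⟩ := (h1 a).1 v hR
      exact ⟨v', hR', (h _ _).mpr hE⟩
    · obtain ⟨v', hR', hE⟩ := (h1 a).2 v hR
      exact ⟨v', hR', (h _ _).mpr hE⟩

end Aux2


section Aux3

open Classical

variable {A X : Type}

lemma eqClasses_congr {E E' : X → X → Prop} (h : ∀ x y, E x y ↔ E' x y) :
    eqClasses E = eqClasses E' := by
  have : E = E' := funext fun x => funext fun y => propext (h x y)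
  rw [this]

/-- Correspondence: the `d`-th induced partition consists exactly of the
classes of `EdR … d`. -/
lemma stage_corr [Fintype A] {R : A → X → X → Prop} {θ : ℕ → Set X} {k : ℕ}
    {𝒱 : Set (Set X)} (h𝒱 : 𝒱 = {V | ∃ n < k, V = θ n}) :
    ∀ d : ℕ, stageClasses R 𝒱 d = eqClasses (EdR R θ k d) := by
  intro d
  induction d with
  | zero =>
      show eqClasses (famEq 𝒱) = _
      apply eqClasses_congr
      intro x y
      constructor
      · intro h α hα
        rcases List.mem_map.mp hα with ⟨n, hn, rfl⟩
        exact h (θ n) (by rw [h𝒱]; exact ⟨n, List.mem_range.mp hn, rfl⟩)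
      · intro h V hV
        rw [h𝒱] at hV
        obtain ⟨n, hn, rfl⟩ := hV
        exact h _ (var_mem_atomsL hn 0)
  | succ d ih =>
      show eqClasses (famEq (stageClasses R 𝒱 d ∪
        {V' | ∃ a : A, ∃ V ∈ stageClasses R 𝒱 d, V' = diaPre (R a) V})) = _
      apply eqClasses_congr
      intro x y
      rw [ih]
      constructor
      · intro h
        apply EdR_succ_iff.mpr
        have hEd : EdR R θ k d x y := by
          have hx : x ∈ {z | EdR R θ k d x z} := EdR_refl x
          have hC : {z | EdR R θ k d x z} ∈ eqClasses (EdR R θ k d) := ⟨x, rfl⟩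
          exact (h _ (Set.mem_union_left _ hC)).mp hx
        refine ⟨fun n hn => hEd _ (var_mem_atomsL hn d), fun a => ⟨?_, ?_⟩⟩
        · intro v hR
          have hC : {z | EdR R θ k d v z} ∈ eqClasses (EdR R θ k d) := ⟨v, rfl⟩
          have hpre : diaPre (R a) {z | EdR R θ k d v z} ∈ (eqClasses (EdR R θ k d) ∪
              {V' | ∃ a : A, ∃ V ∈ eqClasses (EdR R θ k d), V' = diaPre (R a) V}) :=
            Set.mem_union_right _ ⟨a, _, hC, rfl⟩
          have hx : x ∈ diaPre (R a) {z | EdR R θ k d v z} := ⟨v, EdR_refl v, hR⟩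
          obtain ⟨v', hv', hR'⟩ := (h _ hpre).mp hx
          exact ⟨v', hR', hv'⟩
        · intro v hR
          have hC : {z | EdR R θ k d v z} ∈ eqClasses (EdR R θ k d) := ⟨v, rfl⟩
          have hpre : diaPre (R a) {z | EdR R θ k d v z} ∈ (eqClasses (EdR R θ k d) ∪
              {V' | ∃ a : A, ∃ V ∈ eqClasses (EdR R θ k d), V' = diaPre (R a) V}) :=
            Set.mem_union_right _ ⟨a, _, hC, rfl⟩
          have hy : y ∈ diaPre (R a) {z | EdR R θ k d v z} := ⟨v, EdR_refl v, hR⟩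
          obtain ⟨v', hv', hR'⟩ := (h _ hpre).mpr hy
          exact ⟨v', hR', hv'⟩
      · intro hE V hV
        rcases hV with hV | hV
        · obtain ⟨x₀, rfl⟩ := hV
          have hEd : EdR R θ k d x y := EdR_le (Nat.le_succ d) hE
          constructor
          · intro hx
            exact EdR_trans hx hEd
          · intro hy
            exact EdR_trans hy (EdR_symm hEd)
        · obtain ⟨a, V₀, hV₀, rfl⟩ := hV
          obtain ⟨x₀, rfl⟩ := hV₀
          have hbf := EdR_succ_iff.mp hE
          constructor
          · rintro ⟨v, hv, hR⟩
            obtain ⟨v', hR', hE'⟩ := (hbf.2 a).1 v hR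
            exact ⟨v', EdR_trans hv hE', hR'⟩
          · rintro ⟨v, hv, hR⟩
            obtain ⟨v', hR', hE'⟩ := (hbf.2 a).2 v hR
            exact ⟨v', EdR_trans hv hE', hR'⟩

lemma enat_biInf_le {S : Set ℕ} {d : ℕ} (h : (⨅ e ∈ S, (e : ℕ∞)) ≤ (d : ℕ∞)) :
    ∃ e ∈ S, e ≤ d := by
  by_contra hc
  push_neg at hc
  have h2 : ((d : ℕ∞) + 1) ≤ ⨅ e ∈ S, (e : ℕ∞) := by
    apply le_iInf₂
    intro e he
    have hde : d < e := hc e he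
    exact_mod_cast Nat.succ_le_of_lt hde
  have h3 := le_trans h2 h
  have h4 : d + 1 ≤ d := by exact_mod_cast h3
  omega

/-- Stabilization: if the modal depth of the family generated by `θ` is at most `d`,
then `EdR … d` already coincides with `EdR … e` for every `e`. -/
lemma EdR_stab [Fintype A] {R : A → X → X → Prop} {θ : ℕ → Set X} {k : ℕ}
    {𝒱 : Set (Set X)} (h𝒱 : 𝒱 = {V | ∃ n < k, V = θ n}) {d : ℕ}
    (hmd : mdFam R 𝒱 ≤ (d : ℕ∞)) :
    ∀ (e : ℕ) (x y : X), EdR R θ k d x y → EdR R θ k e x y := by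
  have hstage := stage_corr (R := R) h𝒱
  have step1 : ∀ x y : X, EdR R θ k (d+1) x y ↔ EdR R θ k d x y := by
    intro x y
    constructor
    · exact EdR_le (Nat.le_succ d)
    · intro hxy
      have hVmem : {z | EdR R θ k (d+1) x z} ∈ stageClasses R 𝒱 (d+1) := by
        rw [hstage (d+1)]; exact ⟨x, rfl⟩
      have hVunion : {z | EdR R θ k (d+1) x z} ∈ stageUnion R 𝒱 :=
        Set.mem_iUnion.mpr ⟨d+1, hVmem⟩
      have hblk : mdBlock R 𝒱 {z | EdR R θ k (d+1) x z} ≤ (d : ℕ∞) := by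
        refine le_trans ?_ hmd
        unfold mdFam
        exact le_iSup₂ (f := fun V _ => mdBlock R 𝒱 V) _ hVunion
      unfold mdBlock at hblk
      obtain ⟨e, he, hed⟩ := enat_biInf_le hblk
      simp only [Set.mem_setOf_eq] at he
      rw [hstage e] at he
      obtain ⟨x₁, hx₁⟩ := he
      have hxV : x ∈ {z | EdR R θ k (d+1) x z} := EdR_refl x
      show y ∈ {z | EdR R θ k (d+1) x z}
      rw [hx₁] at hxV ⊢
      exact EdR_trans hxV (EdR_le hed hxy)
  have step2 : ∀ j : ℕ, ∀ x y : X, EdR R θ k (d+j) x y ↔ EdR R θ k d x y := by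
    intro j
    induction j with
    | zero => intro x y; exact Iff.rfl
    | succ j ih =>
        intro x y
        exact (EdR_succ_congr ih x y).trans (step1 x y)
  intro e x y hxy
  rcases le_total e d with h | h
  · exact EdR_le h hxy
  · have he : e = d + (e - d) := by omega
    rw [he]
    exact (step2 (e-d) x y).mpr hxy

/-- Under the stabilization hypothesis, `EdR … d` implies agreement on all
formulas with variables below `k`. -/
lemma EdR_stab_all [Fintype A] {R : A → X → X → Prop} {θ : ℕ → Set X} {k : ℕ}
    {𝒱 : Set (Set X)} (h𝒱 : 𝒱 = {V | ∃ n < k, V = θ n}) {d : ℕ}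
    (hmd : mdFam R 𝒱 ≤ (d : ℕ∞)) {x y : X} (hxy : EdR R θ k d x y)
    (χ : MF A) (hχ : MF.varsBelow k χ) :
    satM R θ x χ ↔ satM R θ y χ :=
  EdR_determines χ (MF.depth χ) x y hχ le_rfl (EdR_stab h𝒱 hmd (MF.depth χ) x y hxy)

end Aux3


section Aux4

open Classical

variable {A X : Type}

/-- Truth transfer between a disjoint sum and its components. -/
lemma satM_disjSum {I : Type} (Fam : I → KFrame A) (Ξ : ∀ i, ℕ → Set (Fam i).W)
    (χ : MF A) : ∀ (i : I) (u : (Fam i).W),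
    satM (disjSum Fam).R (fun n => {x : (disjSum Fam).W | x.2 ∈ Ξ x.1 n}) ⟨i, u⟩ χ ↔
      satM (Fam i).R (Ξ i) u χ := by
  induction χ with
  | var n => intro i u; exact Iff.rfl
  | bot => intro i u; exact Iff.rfl
  | imp φ ψ ihφ ihψ => intro i u; exact imp_congr (ihφ i u) (ihψ i u)
  | dia a φ ih =>
      intro i u
      constructor
      · rintro ⟨y, ⟨j, u', v', h1, h2, h3⟩, hy⟩
        injection h1 with hj hu
        subst hj
        have hu' := eq_of_heq hu
        subst hu'
        subst h2
        exact ⟨v', h3, (ih i v').mp hy⟩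
      · rintro ⟨v, hR, hv⟩
        exact ⟨⟨i, v⟩, ⟨i, u, v, rfl, rfl, hR⟩, (ih i v).mpr hv⟩

/-- A strict bound on the variables of a formula. -/
def maxVar : MF A → ℕ
  | .var n => n + 1
  | .bot => 0
  | .imp φ ψ => max (maxVar φ) (maxVar ψ)
  | .dia _ φ => maxVar φ

lemma varsBelow_mono {k k' : ℕ} (h : k ≤ k') (φ : MF A) :
    MF.varsBelow k φ → MF.varsBelow k' φ := by
  induction φ with
  | var n => intro hv; exact lt_of_lt_of_le hv h
  | bot => intro _; trivial
  | imp φ ψ ihφ ihψ => rintro ⟨h1, h2⟩; exact ⟨ihφ h1, ihψ h2⟩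
  | dia a φ ih => intro hv; exact ih hv

lemma varsBelow_maxVar (φ : MF A) : MF.varsBelow (maxVar φ) φ := by
  induction φ with
  | var n => exact Nat.lt_succ_self n
  | bot => trivial
  | imp φ ψ ihφ ihψ =>
      exact ⟨varsBelow_mono (le_max_left _ _) φ ihφ, varsBelow_mono (le_max_right _ _) ψ ihψ⟩
  | dia a φ ih => exact ih

/-- Substitution killing all variables `≥ k`. -/
def killσ (k : ℕ) : ℕ → MF A := fun n => if n < k then .var n else .bot

lemma varsBelow_subst_kill (k : ℕ) (χ : MF A) : MF.varsBelow k (χ.subst (killσ k)) := by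
  induction χ with
  | var n =>
      by_cases h : n < k
      · simp [MF.subst, killσ, h, MF.varsBelow]
      · simp [MF.subst, killσ, h, MF.varsBelow]
  | bot => trivial
  | imp φ ψ ihφ ihψ => exact ⟨ihφ, ihψ⟩
  | dia a φ ih => exact ih

lemma depth_subst_kill (k : ℕ) (χ : MF A) : MF.depth (χ.subst (killσ k)) ≤ MF.depth χ := by
  induction χ with
  | var n =>
      by_cases h : n < k
      · simp [MF.subst, killσ, h, MF.depth]
      · simp [MF.subst, killσ, h, MF.depth]
  | bot => exact le_refl _
  | imp φ ψ ihφ ihψ =>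
      show max _ _ ≤ max _ _
      exact max_le_max ihφ ihψ
  | dia a φ ih =>
      show MF.depth _ + 1 ≤ MF.depth φ + 1
      omega
  
lemma satM_subst_kill {R : A → X → X → Prop} {θ : ℕ → Set X} {k : ℕ}
    (hθ : ∀ n, k ≤ n → θ n = ∅) (χ : MF A) :
    ∀ w : X, satM R θ w (χ.subst (killσ k)) ↔ satM R θ w χ := by
  induction χ with
  | var n =>
      intro w
      by_cases h : n < k
      · simp [MF.subst, killσ, h]
      · simp [MF.subst, killσ, h, hθ n (Nat.le_of_not_lt h)]
  | bot => intro w; exact Iff.rfl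
  | imp φ ψ ihφ ihψ =>
      intro w
      rw [show (MF.imp φ ψ).subst (killσ k) = .imp (φ.subst (killσ k)) (ψ.subst (killσ k))
        from rfl, satM_imp, satM_imp, ihφ, ihψ]
  | dia a φ ih =>
      intro w
      rw [show (MF.dia a φ).subst (killσ k) = .dia a (φ.subst (killσ k)) from rfl,
        satM_dia, satM_dia]
      exact exists_congr fun v => and_congr_right fun _ => ih v

end Aux4


section Aux5

open Classical

variable {A X : Type}

lemma exists_enum {𝒱 : Set (Set X)} (h : 𝒱.Finite) :
    ∃ (k : ℕ) (θ : ℕ → Set X), (∀ n, k ≤ n → θ n = ∅) ∧ 𝒱 = {V | ∃ n < k, V = θ n} := by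
  classical
  obtain ⟨l, hl⟩ : ∃ l : List (Set X), ∀ V, V ∈ 𝒱 ↔ V ∈ l :=
    ⟨h.toFinset.toList, fun V => by rw [Finset.mem_toList, Set.Finite.mem_toFinset]⟩
  refine ⟨l.length, fun n => l.getD n ∅, fun n hn => List.getD_eq_default _ _ hn, ?_⟩
  ext V
  simp only [Set.mem_setOf_eq]
  rw [hl V, List.mem_iff_getElem]
  constructor
  · rintro ⟨n, hn, hV⟩
    exact ⟨n, hn, by rw [List.getD_eq_getElem _ _ hn, hV]⟩
  · rintro ⟨n, hn, hV⟩
    exact ⟨n, hn, by rw [List.getD_eq_getElem _ _ hn] at hV; exact hV.symm⟩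

/-- Direction 1: the modal depth of the class is at most that of its logic. -/
lemma dir1 {A : Type} [Fintype A] (𝓕 : Set (KFrame A)) :
    mdClass 𝓕 ≤ mdLogic (LogC 𝓕) := by
  classical
  unfold mdClass
  apply iSup₂_le
  intro F hF
  unfold mdFrame
  apply iSup₂_le
  intro 𝒱 h𝒱fin
  unfold mdFam
  apply iSup₂_le
  intro V hV
  obtain ⟨k, θ, hθ, h𝒱⟩ := exists_enum h𝒱fin
  have hstage := stage_corr (R := F.R) h𝒱
  have hex : ∃ d : ℕ, V ∈ stageClasses F.R 𝒱 d := by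
    simpa [stageUnion] using hV
  obtain ⟨e, he, hmin⟩ : ∃ e, (V ∈ stageClasses F.R 𝒱 e) ∧
      ∀ e' < e, V ∉ stageClasses F.R 𝒱 e' :=
    ⟨Nat.find hex, Nat.find_spec hex, fun e' h' => Nat.find_min hex h'⟩
  have hblk : mdBlock F.R 𝒱 V ≤ (e : ℕ∞) := by
    unfold mdBlock
    exact iInf₂_le e he
  cases e with
  | zero => exact le_trans hblk (by exact_mod_cast zero_le)
  | succ m =>
    rw [hstage (m+1)] at he
    obtain ⟨x₀, rfl⟩ := he
    have hne : ∃ b, EdR F.R θ k m x₀ b ∧ ¬ EdR F.R θ k (m+1) x₀ b := by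
      by_contra hc
      push_neg at hc
      apply hmin m (Nat.lt_succ_self m)
      rw [hstage m]
      refine ⟨x₀, ?_⟩
      ext z
      simp only [Set.mem_setOf_eq]
      exact ⟨fun h => EdR_le (Nat.le_succ m) h, fun h => hc z h⟩
    obtain ⟨b, hmb, hm1b⟩ := hne
    set φ₀ := typeAt F.R θ (atomsL A k (m+1)) x₀ with hφ₀
    have hsatx : satM F.R θ x₀ φ₀ := satM_typeAt_self
    have hsatb : ¬ satM F.R θ b φ₀ := by
      intro hb
      exact hm1b (fun α hα => ((satM_typeAt.mp hb) α hα).symm)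
    refine le_trans hblk ?_
    unfold mdLogic
    refine le_trans ?_ (le_iSup _ φ₀)
    apply le_iInf₂
    intro ψ hψ
    by_contra hlt
    have hlt' : (MF.depth ψ : ℕ∞) < ((m+1 : ℕ) : ℕ∞) := not_le.mp hlt
    have hd : MF.depth ψ ≤ m := by
      have : MF.depth ψ < m + 1 := by exact_mod_cast hlt'
      omega
    have hval := hψ F hF θ
    have hx := satM_iff.mp (hval x₀)
    have hb := satM_iff.mp (hval b)
    have h1 : satM F.R θ x₀ (ψ.subst (killσ k)) ↔ satM F.R θ x₀ ψ := satM_subst_kill hθ ψ x₀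
    have h2 : satM F.R θ b (ψ.subst (killσ k)) ↔ satM F.R θ b ψ := satM_subst_kill hθ ψ b
    have h3 : satM F.R θ x₀ (ψ.subst (killσ k)) ↔ satM F.R θ b (ψ.subst (killσ k)) :=
      EdR_determines _ m x₀ b (varsBelow_subst_kill k ψ)
        (le_trans (depth_subst_kill k ψ) hd) hmb
    exact hsatb (hb.mpr (h2.mp (h3.mp (h1.mpr (hx.mp hsatx)))))

/-- Direction 2: the modal depth of the logic is at most that of the class. -/
lemma dir2 {A : Type} [Fintype A] (𝓕 : Set (KFrame A))
    (hclosed : ∀ (I : Type) [Countable I] (F : I → KFrame A),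
      (∀ i : I, F i ∈ 𝓕) → disjSum F ∈ 𝓕) :
    mdLogic (LogC 𝓕) ≤ mdClass 𝓕 := by
  classical
  unfold mdLogic
  apply iSup_le
  intro φ
  rcases eq_or_ne (mdClass 𝓕) ⊤ with htop | hne
  · rw [htop]; exact le_top
  obtain ⟨d, hd0⟩ := WithTop.ne_top_iff_exists.mp hne
  have hd : (d : ℕ∞) = mdClass 𝓕 := by exact_mod_cast hd0
  set k := maxVar φ with hk
  set ψ := MF.bigOr ((typesL A k d).filter
      (fun τ => decide (∃ F, F ∈ 𝓕 ∧ ∃ (θ : ℕ → Set F.W) (w : F.W),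
        satM F.R θ w τ ∧ satM F.R θ w φ))) with hψ
  have hψdepth : MF.depth ψ ≤ d := by
    rw [hψ]
    exact depth_bigOr_le (fun τ hτ => (mem_typesL_bound (List.mem_of_mem_filter hτ)).2)
  have hmem : MF.iff φ ψ ∈ LogC 𝓕 := by
    intro F hF θ w
    rw [satM_iff]
    constructor
    · intro hφ
      rw [hψ, satM_bigOr]
      refine ⟨typeAt F.R θ (atomsL A k d) w, ?_, satM_typeAt_self⟩
      apply List.mem_filter.mpr
      refine ⟨typeAt_mem_typesL, ?_⟩
      rw [decide_eq_true_eq]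
      exact ⟨F, hF, θ, w, satM_typeAt_self, hφ⟩
    · intro hsψ
      rw [hψ, satM_bigOr] at hsψ
      obtain ⟨τ, hτmem, hwτ⟩ := hsψ
      have hfil := List.mem_filter.mp hτmem
      have hτtypes := hfil.1
      obtain ⟨F', hF', θ', w', hw'τ, hw'φ⟩ := of_decide_eq_true hfil.2
      set Fam : Bool → KFrame A := fun i => bif i then F else F' with hFam
      have hGmem : disjSum Fam ∈ 𝓕 := by
        apply hclosed Bool Fam
        intro i
        cases i
        · show (bif false then F else F') ∈ 𝓕
          simpa using hF'
        · show (bif true then F else F') ∈ 𝓕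
          simpa using hF
      set Ξ : ∀ i : Bool, ℕ → Set (Fam i).W := fun i => match i with
        | true => θ
        | false => θ' with hΞ
      set Θ : ℕ → Set (disjSum Fam).W := fun n => {x | x.2 ∈ Ξ x.1 n} with hΘ
      have ha : satM (disjSum Fam).R Θ ⟨true, w⟩ τ := (satM_disjSum Fam Ξ τ true w).mpr hwτ
      have hbτ : satM (disjSum Fam).R Θ ⟨false, w'⟩ τ :=
        (satM_disjSum Fam Ξ τ false w').mpr hw'τ
      have hbφ : satM (disjSum Fam).R Θ ⟨false, w'⟩ φ :=
        (satM_disjSum Fam Ξ φ false w').mpr hw'φ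
      obtain ⟨s, _, hτeq⟩ := List.mem_map.mp hτtypes
      rw [← hτeq] at ha hbτ
      have hEd : EdR (disjSum Fam).R Θ k d ⟨true, w⟩ ⟨false, w'⟩ := by
        intro α hα
        exact (satM_mkType.mp ha α hα).trans (satM_mkType.mp hbτ α hα).symm
      set 𝒱 : Set (Set (disjSum Fam).W) := {V | ∃ n < k, V = Θ n} with h𝒱
      have h𝒱fin : 𝒱.Finite := by
        have himg : 𝒱 = Θ '' (Set.Iio k) := by
          ext V
          simp only [h𝒱, Set.mem_setOf_eq, Set.mem_image, Set.mem_Iio]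
          constructor
          · rintro ⟨n, hn, h⟩; exact ⟨n, hn, h.symm⟩
          · rintro ⟨n, hn, h⟩; exact ⟨n, hn, h.symm⟩
        rw [himg]
        exact (Set.finite_Iio k).image Θ
      have hmdf : mdFam (disjSum Fam).R 𝒱 ≤ (d : ℕ∞) := by
        rw [hd]
        unfold mdClass
        refine le_trans ?_ (le_iSup₂ (f := fun F _ => mdFrame F) _ hGmem)
        unfold mdFrame
        exact le_iSup₂ (f := fun 𝒱 _ => mdFam (disjSum Fam).R 𝒱) 𝒱 h𝒱fin
      have hagree := EdR_stab_all (R := (disjSum Fam).R) h𝒱 hmdf hEd φ (varsBelow_maxVar φ)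
      exact (satM_disjSum Fam Ξ φ true w).mp (hagree.mpr hbφ)
  refine le_trans (iInf₂_le ψ (show ψ ∈ {ψ' : MF A | MF.iff φ ψ' ∈ LogC 𝓕} from hmem)) ?_
  rw [← hd]
  exact_mod_cast hψdepth

end Aux5

/-- for a class of Kripke frames closed under countable disjoint sums, the
modal depth of the class equals the modal depth of its logic. -/
theorem stmt14 {A : Type} [Fintype A] (𝓕 : Set (KFrame A))
    (hclosed : ∀ (I : Type) [Countable I] (F : I → KFrame A),
      (∀ i : I, F i ∈ 𝓕) → disjSum F ∈ 𝓕) :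
    mdClass 𝓕 = mdLogic (LogC 𝓕) :=
  le_antisymm (dir1 𝓕) (dir2 𝓕 hclosed)
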